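/- arXiv:1811.00321 — 4 statements merged into one kernel-verified Lean document; each statement's English description precedes it below -/
import Mathlib

section
/- Let F : ℝⁿ → ℝⁿ be a bounded C¹ map with 0 ≤ Fᵢ(x) ≤ M for all x and each coordinate i, let τ > 0, and let A, B ∈ ℝ be constants. Then the differential equation x' = -(1/τ + F(x))·x + A + B·F(x) (where the product F(x)·x is componentwise) with any initial condition x(0) ∈ ℝⁿ has a unique solution defined on all of [0, ∞). -/
open Set Metric

/-- Barrier lemma: if `f 0 ≤ K` and whenever `f` reaches `K` on `[0,T]` its derivative is
nonpositive, then `f T ≤ K`. -/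
private lemma barrier_le {f g : ℝ → ℝ} {K T : ℝ} (hT : 0 ≤ T)
    (hf : ∀ t ∈ Set.Icc (0:ℝ) T, HasDerivAt f (g t) t)
    (h0 : f 0 ≤ K) (hK : ∀ t ∈ Set.Icc (0:ℝ) T, K ≤ f t → g t ≤ 0) :
    f T ≤ K := by
  by_contra hcon
  push_neg at hcon
  have hfc : ContinuousOn f (Set.Icc 0 T) := fun u hu =>
    (hf u hu).continuousAt.continuousWithinAt
  set S : Set ℝ := Set.Icc 0 T ∩ f ⁻¹' Set.Iic K with hSdef
  have hScl : IsClosed S := hfc.preimage_isClosed_of_isClosed isClosed_Icc isClosed_Iic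
  have hScp : IsCompact S := isCompact_Icc.of_isClosed_subset hScl Set.inter_subset_left
  have hSne : S.Nonempty := ⟨0, ⟨le_rfl, hT⟩, h0⟩
  have hsmem : sSup S ∈ S := hScp.sSup_mem hSne
  set s := sSup S with hs
  have hsT : s ≤ T := hsmem.1.2
  have hs0 : 0 ≤ s := hsmem.1.1
  have hfs : f s ≤ K := hsmem.2
  have hsltT : s < T := lt_of_le_of_ne hsT fun h => absurd hfs (h ▸ not_le.2 hcon)
  have hgt : ∀ u ∈ Set.Ioc s T, K < f u := by
    intro u hu
    by_contra hle
    push_neg at hle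
    have huS : u ∈ S := ⟨⟨hs0.trans hu.1.le, hu.2⟩, hle⟩
    exact absurd (le_csSup hScp.bddAbove huS) (not_le.2 hu.1)
  have hanti : AntitoneOn f (Set.Icc s T) := by
    apply antitoneOn_of_deriv_nonpos (convex_Icc s T)
      (hfc.mono (Set.Icc_subset_Icc hs0 le_rfl))
    · intro u hu
      rw [interior_Icc] at hu
      exact (hf u ⟨hs0.trans hu.1.le, hu.2.le⟩).differentiableAt.differentiableWithinAt
    · intro u hu
      rw [interior_Icc] at hu
      have hu' : u ∈ Set.Icc (0:ℝ) T := ⟨hs0.trans hu.1.le, hu.2.le⟩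
      rw [(hf u hu').deriv]
      exact hK u hu' (hgt u ⟨hu.1, hu.2.le⟩).le
  have := hanti (Set.left_mem_Icc.2 hsltT.le) (Set.right_mem_Icc.2 hsltT.le) hsltT.le
  linarith

/-- The LTC ODE `x' = -(1/τ + F(x))·x + A + B·F(x)` (componentwise) with bounded `C¹`
right-hand side `F` has a unique solution on `[0, ∞)` for any initial condition. -/
theorem stmt_1 (n : ℕ) (τ M A B : ℝ) (hτ : 0 < τ)
    (F : (Fin n → ℝ) → (Fin n → ℝ)) (hF : ContDiff ℝ 1 F)
    (hFbound : ∀ x i, 0 ≤ F x i ∧ F x i ≤ M)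
    (x0 : Fin n → ℝ) :
    ∃ x : ℝ → Fin n → ℝ,
      (x 0 = x0 ∧
        ∀ t : ℝ, 0 ≤ t → ∀ i : Fin n,
          HasDerivAt (fun s => x s i)
            (-(1/τ + F (x t) i) * x t i + A + B * F (x t) i) t) ∧
      ∀ y : ℝ → Fin n → ℝ,
        (y 0 = x0 ∧
          ∀ t : ℝ, 0 ≤ t → ∀ i : Fin n,
            HasDerivAt (fun s => y s i)
              (-(1/τ + F (y t) i) * y t i + A + B * F (y t) i) t) →
        ∀ t : ℝ, 0 ≤ t → y t = x t := by
  rcases Nat.eq_zero_or_pos n with hn | hn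
  · subst hn
    refine ⟨fun _ => x0, ⟨rfl, fun t _ i => i.elim0⟩, fun y _ t _ => funext fun i => i.elim0⟩
  have hi0 : Nonempty (Fin n) := ⟨⟨0, hn⟩⟩
  obtain ⟨i0⟩ := hi0
  have hM : 0 ≤ M := le_trans (hFbound x0 i0).1 (hFbound x0 i0).2
  set c : ℝ := |A| + |B| * M with hc
  have hc0 : 0 ≤ c := by positivity
  set K : ℝ := max (τ * c) ‖x0‖ with hKdef
  have hK0 : 0 ≤ K := le_trans (by positivity) (le_max_left _ _)
  have hKc : τ * c ≤ K := le_max_left _ _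
  -- the clamping map
  set π : (Fin n → ℝ) → (Fin n → ℝ) := fun z i => min (max (z i) (-K)) K with hπdef
  have hclampR : LipschitzWith 1 (fun a : ℝ => min (max a (-K)) K) :=
    (LipschitzWith.id.max_const (-K)).min_const K
  have hπlip : LipschitzWith 1 π := by
    rw [lipschitzWith_iff_dist_le_mul]
    intro z z'
    rw [NNReal.coe_one, one_mul]
    refine dist_pi_le_iff dist_nonneg |>.2 fun i => ?_
    calc dist (π z i) (π z' i) ≤ 1 * dist (z i) (z' i) := by
          simpa using hclampR.dist_le_mul (z i) (z' i)
      _ ≤ dist z z' := by rw [one_mul]; exact dist_le_pi_dist z z' i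
  have hπmem : ∀ z, π z ∈ closedBall (0 : Fin n → ℝ) K := by
    intro z
    rw [mem_closedBall_zero_iff]
    refine (pi_norm_le_iff_of_nonneg hK0).2 fun i => ?_
    rw [Real.norm_eq_abs, abs_le]
    constructor
    · exact le_min (le_max_right _ _) (neg_le_self hK0)
    · exact min_le_right _ _
  have hπid : ∀ z : Fin n → ℝ, (∀ i, |z i| ≤ K) → π z = z := by
    intro z hz
    funext i
    rcases abs_le.1 (hz i) with ⟨h1, h2⟩
    simp [hπdef, max_eq_left h1, min_eq_left h2]
  -- the vector field
  set v : (Fin n → ℝ) → (Fin n → ℝ) :=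
    fun z i => -(1/τ + F z i) * z i + A + B * F z i with hvdef
  have hv : ContDiff ℝ 1 v := by
    rw [contDiff_pi]
    intro i
    have hFi : ContDiff ℝ 1 (fun z : Fin n → ℝ => F z i) := (contDiff_pi.1 hF) i
    have hzi : ContDiff ℝ 1 (fun z : Fin n → ℝ => z i) := contDiff_apply ℝ ℝ i
    exact (((contDiff_const.add hFi).neg.mul hzi).add contDiff_const).add
      (contDiff_const.mul hFi)
  set w : (Fin n → ℝ) → (Fin n → ℝ) := fun z => v (π z) with hwdef
  -- Lipschitz bound for w
  obtain ⟨L, hL⟩ : ∃ L : NNReal, LipschitzOnWith L v (closedBall (0 : Fin n → ℝ) K) := by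
    have hcont : Continuous (fderiv ℝ v) := hv.continuous_fderiv one_ne_zero
    obtain ⟨C', hC'⟩ := (isCompact_closedBall (0 : Fin n → ℝ) K).exists_bound_of_continuousOn
      hcont.continuousOn
    refine ⟨⟨max C' 0, le_max_right _ _⟩, Convex.lipschitzOnWith_of_nnnorm_fderiv_le
      (fun z _ => (hv.differentiable one_ne_zero).differentiableAt) (fun z hz => ?_)
      (convex_closedBall _ _)⟩
    apply NNReal.coe_le_coe.1
    exact le_trans (hC' z hz) (le_max_left _ _)
  have hwlip : LipschitzWith L w := by
    intro z z'
    calc edist (w z) (w z') = edist (v (π z)) (v (π z')) := rfl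
      _ ≤ L * edist (π z) (π z') := hL (hπmem z) (hπmem z')
      _ ≤ L * (1 * edist z z') := by
          exact mul_le_mul_right (hπlip z z') L
      _ = L * edist z z' := by rw [one_mul]
  -- uniform bound for w
  obtain ⟨C, hC0, hCb⟩ : ∃ C : ℝ, 0 ≤ C ∧ ∀ z, ‖w z‖ ≤ C := by
    obtain ⟨C', hC'⟩ := (isCompact_closedBall (0 : Fin n → ℝ) K).exists_bound_of_continuousOn
      (hv.continuous.continuousOn)
    exact ⟨max C' 0, le_max_right _ _, fun z => le_trans (hC' _ (hπmem z)) (le_max_left _ _)⟩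
  -- solutions on [-(m+1), m+1]
  have hsol : ∀ m : ℕ, ∃ f : ℝ → (Fin n → ℝ), f 0 = x0 ∧
      ∀ t ∈ Set.Ioo (-(m+1:ℝ)) (m+1), HasDerivAt f (w (f t)) t := by
    intro m
    set T : ℝ := m + 1 with hT
    have hT0 : (0:ℝ) < T := by positivity
    have hpl : IsPicardLindelof (fun _ : ℝ => w) (tmin := -T) (tmax := T)
        ⟨0, neg_nonpos.2 hT0.le, hT0.le⟩ x0 ⟨C * T, mul_nonneg hC0 hT0.le⟩ 0 ⟨C, hC0⟩ L :=
      IsPicardLindelof.of_time_independent (fun z _ => hCb z) hwlip.lipschitzOnWith (by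
        show C * max (T - 0) (0 - -T) ≤ C * T - 0
        rw [sub_zero, zero_sub, neg_neg, max_self, sub_zero])
    obtain ⟨g, hg0, hgd⟩ := hpl.exists_eq_forall_mem_Icc_hasDerivWithinAt₀
    exact ⟨g, hg0, fun t ht =>
      (hgd t (Set.Ioo_subset_Icc_self ht)).hasDerivAt (Icc_mem_nhds ht.1 ht.2)⟩
  choose f hf0 hfd using hsol
  -- agreement of the partial solutions
  have hagree : ∀ (m m' : ℕ) (t : ℝ), |t| < m + 1 → |t| < m' + 1 → f m t = f m' t := by
    intro m m' t h1 h2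
    set b : ℝ := min (m+1) (m'+1) with hb
    have hb0 : (0:ℝ) < b := lt_min (by positivity) (by positivity)
    have hsub : Set.Ioo (-b) b ⊆ Set.Ioo (-(m+1:ℝ)) (m+1) :=
      Set.Ioo_subset_Ioo (neg_le_neg (min_le_left _ _)) (min_le_left _ _)
    have hsub' : Set.Ioo (-b) b ⊆ Set.Ioo (-(m'+1:ℝ)) (m'+1) :=
      Set.Ioo_subset_Ioo (neg_le_neg (min_le_right _ _)) (min_le_right _ _)
    have key := ODE_solution_unique_of_mem_Ioo
      (v := fun _ : ℝ => w) (s := fun _ => Set.univ) (K := L)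
      (fun _ _ => hwlip.lipschitzOnWith)
      (t₀ := 0) (a := -b) (b := b) ⟨neg_lt_zero.2 hb0, hb0⟩
      (f := f m) (g := f m')
      (fun u hu => ⟨hfd m u (hsub hu), Set.mem_univ _⟩)
      (fun u hu => ⟨hfd m' u (hsub' hu), Set.mem_univ _⟩)
      ((hf0 m).trans (hf0 m').symm)
    exact key (abs_lt.1 (lt_min h1 h2) |>.imp (fun h => h) (fun h => h) |> fun h => ⟨h.1, h.2⟩)
  set x : ℝ → Fin n → ℝ := fun t => f ⌈|t|⌉₊ t with hxdef
  have habs : ∀ t : ℝ, |t| < (⌈|t|⌉₊ : ℝ) + 1 :=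
    fun t => lt_of_le_of_lt (Nat.le_ceil _) (by linarith)
  have hxf : ∀ (m : ℕ) (t : ℝ), |t| < m + 1 → x t = f m t :=
    fun m t h => hagree _ m t (habs t) h
  have hx0 : x 0 = x0 := by
    have := hxf 0 0 (by norm_num)
    rw [this, hf0]
  have hxd : ∀ t, HasDerivAt x (w (x t)) t := by
    intro t
    set m := ⌈|t|⌉₊ with hm
    have htm : t ∈ Set.Ioo (-(m+1:ℝ)) (m+1) := abs_lt.1 (habs t) |> fun h => ⟨h.1, h.2⟩
    have heq : x =ᶠ[nhds t] f m := by
      filter_upwards [isOpen_Ioo.mem_nhds htm] with u hu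
      exact hxf m u (abs_lt.2 ⟨hu.1, hu.2⟩)
    have hd := hfd m t htm
    rw [← hxf m t (habs t)] at hd
    exact hd.congr_of_eventuallyEq heq
  -- arithmetic facts at the barrier
  have harithup : ∀ (Fc r : ℝ), 0 ≤ Fc → Fc ≤ M → K ≤ r →
      -(1/τ + Fc) * r + A + B * Fc ≤ 0 := by
    intro Fc r h1 h2 h3
    have hA : A ≤ |A| := le_abs_self A
    have hBF : B * Fc ≤ |B| * M := by
      calc B * Fc ≤ |B * Fc| := le_abs_self _
        _ = |B| * |Fc| := abs_mul _ _
        _ = |B| * Fc := by rw [abs_of_nonneg h1]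
        _ ≤ |B| * M := mul_le_mul_of_nonneg_left h2 (abs_nonneg B)
    have hr0 : 0 ≤ r := hK0.trans h3
    have h4 : c ≤ r / τ := by
      rw [le_div_iff₀ hτ]
      calc c * τ = τ * c := mul_comm _ _
        _ ≤ K := hKc
        _ ≤ r := h3
    have h5 : -(1/τ + Fc) * r ≤ -(r/τ) := by
      have : 0 ≤ Fc * r := mul_nonneg h1 hr0
      have hdiv : 1/τ * r = r/τ := by ring
      nlinarith
    calc -(1/τ + Fc) * r + A + B * Fc ≤ -(r/τ) + |A| + |B| * M := by linarith
      _ = -(r/τ) + c := by rw [hc]; ring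
      _ ≤ 0 := by linarith
  have harithdn : ∀ (Fc r : ℝ), 0 ≤ Fc → Fc ≤ M → r ≤ -K →
      0 ≤ -(1/τ + Fc) * r + A + B * Fc := by
    intro Fc r h1 h2 h3
    have := harithup Fc (-r) h1 h2 (by linarith)
    have hA : -A ≤ |A| := neg_le_abs A
    have hBF : -(B * Fc) ≤ |B| * M := by
      calc -(B * Fc) ≤ |B * Fc| := neg_le_abs _
        _ = |B| * |Fc| := abs_mul _ _
        _ = |B| * Fc := by rw [abs_of_nonneg h1]
        _ ≤ |B| * M := mul_le_mul_of_nonneg_left h2 (abs_nonneg B)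
    have hr0 : r ≤ 0 := by linarith
    have h4 : c ≤ (-r) / τ := by
      rw [le_div_iff₀ hτ]
      calc c * τ = τ * c := mul_comm _ _
        _ ≤ K := hKc
        _ ≤ -r := by linarith
    have h5 : -(r/τ) ≤ -(1/τ + Fc) * r := by
      have : 0 ≤ Fc * (-r) := mul_nonneg h1 (by linarith)
      have hdiv : 1/τ * r = r/τ := by ring
      nlinarith
    have : 0 ≤ -(r/τ) - c := by
      have : c ≤ -(r/τ) := by
        calc c ≤ (-r)/τ := h4
          _ = -(r/τ) := by ring
      linarith
    calc (0:ℝ) ≤ -(r/τ) - c := this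
      _ = -(r/τ) - |A| - |B| * M := by rw [hc]; ring
      _ ≤ -(1/τ + Fc) * r + A + B * Fc := by linarith
  -- the clamped field at the barrier
  have hwup : ∀ (z : Fin n → ℝ) (i : Fin n), K ≤ z i → w z i ≤ 0 := by
    intro z i hzi
    have hπz : π z i = K := by
      have h1 : max (z i) (-K) = z i := max_eq_left (by linarith [neg_le_self hK0])
      simp [hπdef, h1, min_eq_right hzi]
    show -(1/τ + F (π z) i) * (π z i) + A + B * F (π z) i ≤ 0
    rw [hπz]
    exact harithup _ _ (hFbound (π z) i).1 (hFbound (π z) i).2 le_rfl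
  have hwdn : ∀ (z : Fin n → ℝ) (i : Fin n), z i ≤ -K → 0 ≤ w z i := by
    intro z i hzi
    have hπz : π z i = -K := by
      have h1 : max (z i) (-K) = -K := max_eq_right hzi
      simp [hπdef, h1, min_eq_left (neg_le_self hK0)]
    show 0 ≤ -(1/τ + F (π z) i) * (π z i) + A + B * F (π z) i
    rw [hπz]
    exact harithdn _ _ (hFbound (π z) i).1 (hFbound (π z) i).2 le_rfl
  have hx00 : ∀ i, |x0 i| ≤ K := by
    intro i
    calc |x0 i| = ‖x0 i‖ := rfl
      _ ≤ ‖x0‖ := norm_le_pi_norm x0 i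
      _ ≤ K := le_max_right _ _
  -- forward invariance of the ball for x
  have hbound : ∀ t, 0 ≤ t → ∀ i, |x t i| ≤ K := by
    intro t ht i
    have hup : x t i ≤ K := by
      apply barrier_le (g := fun s => w (x s) i) ht
      · intro s _
        exact (hasDerivAt_pi.1 (hxd s)) i
      · rw [hx0]; exact (abs_le.1 (hx00 i)).2
      · intro s _ hs
        exact hwup (x s) i hs
    have hdn : -(x t i) ≤ K := by
      apply barrier_le (f := fun s => -(x s i)) (g := fun s => -(w (x s) i)) ht
      · intro s _
        exact ((hasDerivAt_pi.1 (hxd s)) i).neg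
      · rw [hx0]; linarith [(abs_le.1 (hx00 i)).1]
      · intro s _ hs
        have : x s i ≤ -K := by linarith
        linarith [hwdn (x s) i this]
    exact abs_le.2 ⟨by linarith, hup⟩
  have hwx : ∀ t, 0 ≤ t → w (x t) = v (x t) := by
    intro t ht
    show v (π (x t)) = v (x t)
    rw [hπid (x t) (hbound t ht)]
  refine ⟨x, ⟨hx0, ?_⟩, ?_⟩
  · intro t ht i
    have h := (hasDerivAt_pi.1 (hxd t)) i
    rw [hwx t ht] at h
    exact h
  · rintro y ⟨hy0, hyd⟩ t ht
    have hyv : ∀ s, 0 ≤ s → HasDerivAt y (v (y s)) s := by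
      intro s hs
      exact hasDerivAt_pi.2 fun i => hyd s hs i
    -- forward invariance for y
    have hybound : ∀ s, 0 ≤ s → ∀ i, |y s i| ≤ K := by
      intro s hs i
      have harup : ∀ u, 0 ≤ u → K ≤ y u i → v (y u) i ≤ 0 := by
        intro u hu hyu
        exact harithup _ _ (hFbound (y u) i).1 (hFbound (y u) i).2 hyu
      have hardn : ∀ u, 0 ≤ u → y u i ≤ -K → 0 ≤ v (y u) i := by
        intro u hu hyu
        exact harithdn _ _ (hFbound (y u) i).1 (hFbound (y u) i).2 hyu
      have hup : y s i ≤ K := by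
        apply barrier_le (g := fun u => v (y u) i) hs
        · intro u hu
          exact (hasDerivAt_pi.1 (hyv u hu.1)) i
        · rw [hy0]; exact (abs_le.1 (hx00 i)).2
        · intro u hu hyu
          exact harup u hu.1 hyu
      have hdn : -(y s i) ≤ K := by
        apply barrier_le (f := fun u => -(y u i)) (g := fun u => -(v (y u) i)) hs
        · intro u hu
          exact ((hasDerivAt_pi.1 (hyv u hu.1)) i).neg
        · rw [hy0]; linarith [(abs_le.1 (hx00 i)).1]
        · intro u hu hyu
          have : y u i ≤ -K := by linarith
          linarith [hardn u hu.1 this]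
      exact abs_le.2 ⟨by linarith, hup⟩
    have hyw : ∀ s, 0 ≤ s → HasDerivAt y (w (y s)) s := by
      intro s hs
      have : w (y s) = v (y s) := by
        show v (π (y s)) = v (y s)
        rw [hπid (y s) (hybound s hs)]
      rw [this]
      exact hyv s hs
    have key := ODE_solution_unique (v := fun _ : ℝ => w) (K := L)
      (fun _ => hwlip) (f := y) (g := x) (a := 0) (b := t)
      (fun u hu => (hyv u hu.1).continuousAt.continuousWithinAt)
      (fun u hu => (hyw u hu.1).hasDerivWithinAt)
      (fun u _ => (hxd u).continuousAt.continuousWithinAt)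
      (fun u _ => (hxd u).hasDerivWithinAt)
      (hy0.trans hx0.symm)
    exact key ⟨ht, le_rfl⟩
end

section
/- Let v : [0, T] → ℝ be differentiable and satisfy C·v'(t) = g·(V_leak − v(t)) + Σⱼ₌₁ᴺ wⱼ·σⱼ(t)·(Eⱼ − v(t)) with C, g, wⱼ > 0 and σⱼ(t) ∈ [0, 1] for all t. If v(0) ≤ M where M = max{V_leak, max_j Eⱼ}, then v(t) ≤ M for all t ∈ [0, T]. -/
/-- Forward-invariant upper bound for the LTC neuron membrane potential. -/
theorem stmt_5 (Nn : ℕ) (hN : 0 < Nn) (T C g V_leak : ℝ) (hC : 0 < C) (hg : 0 < g)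
    (w E : Fin Nn → ℝ) (hw : ∀ j, 0 < w j)
    (σ : Fin Nn → ℝ → ℝ) (hσ : ∀ j t, σ j t ∈ Set.Icc (0 : ℝ) 1)
    (v : ℝ → ℝ)
    (hv : ∀ t ∈ Set.Icc (0 : ℝ) T,
      HasDerivAt v ((g * (V_leak - v t) + ∑ j, w j * σ j t * (E j - v t)) / C) t)
    (hM : v 0 ≤ max V_leak (Finset.univ.sup' (Finset.univ_nonempty_iff.mpr ⟨⟨0, hN⟩⟩) E)) :
    ∀ t ∈ Set.Icc (0 : ℝ) T,
      v t ≤ max V_leak (Finset.univ.sup' (Finset.univ_nonempty_iff.mpr ⟨⟨0, hN⟩⟩) E) := by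
  set M := max V_leak (Finset.univ.sup' (Finset.univ_nonempty_iff.mpr ⟨⟨0, hN⟩⟩) E) with hMdef
  have hVM : V_leak ≤ M := le_max_left _ _
  have hEM : ∀ j, E j ≤ M := fun j =>
    le_trans (Finset.le_sup' E (Finset.mem_univ j)) (le_max_right _ _)
  intro t ht
  obtain ⟨ht0, htT⟩ := ht
  -- For every ε > 0, v t ≤ M + ε * (1 + t)
  have key : ∀ ε > (0:ℝ), v t ≤ M + ε * (1 + t) := by
    intro ε hε
    have hcont : ContinuousOn v (Set.Icc 0 T) := fun x hx =>
      (hv x hx).continuousAt.continuousWithinAt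
    have hB : ∀ x : ℝ, HasDerivAt (fun s => M + ε * (1 + s)) ε x := by
      intro x
      have : HasDerivAt (fun s : ℝ => M + ε * (1 + s)) (ε * 1) x :=
        (((hasDerivAt_id x).const_add (1:ℝ)).const_mul ε).const_add M
      simpa using this
    have := image_le_of_deriv_right_lt_deriv_boundary
      (f := v) (f' := fun x => (g * (V_leak - v x) + ∑ j, w j * σ j x * (E j - v x)) / C)
      (a := 0) (b := T) hcont
      (fun x hx => (hv x (Set.Ico_subset_Icc_self hx)).hasDerivWithinAt)
      (B := fun s => M + ε * (1 + s)) (B' := fun _ => ε)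
      (by simpa using hM.trans (by nlinarith))
      hB
      (by
        intro x hx hcontact
        have hcx : v x = M + ε * (1 + x) := hcontact
        have hvx : M ≤ v x := by nlinarith [hx.1]
        have hnum : g * (V_leak - v x) + ∑ j, w j * σ j x * (E j - v x) ≤ 0 := by
          have h1 : g * (V_leak - v x) ≤ 0 := by nlinarith
          have h2 : (∑ j, w j * σ j x * (E j - v x)) ≤ 0 := by
            apply Finset.sum_nonpos
            intro j _
            exact mul_nonpos_of_nonneg_of_nonpos
              (mul_nonneg (hw j).le (hσ j x).1) (by have := hEM j; linarith)
          linarith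
        calc (g * (V_leak - v x) + ∑ j, w j * σ j x * (E j - v x)) / C ≤ 0 :=
              div_nonpos_of_nonpos_of_nonneg hnum hC.le
          _ < ε := hε)
    exact this ⟨ht0, htT⟩
  -- let ε → 0
  by_contra hcon
  push_neg at hcon
  have h1t : (0:ℝ) < 1 + t := by linarith
  have hε : (0:ℝ) < (v t - M) / (1 + t) / 2 := div_pos (div_pos (by linarith) h1t) two_pos
  have := key _ hε
  have : v t ≤ M + (v t - M) / 2 := by
    calc v t ≤ M + (v t - M) / (1 + t) / 2 * (1 + t) := this
      _ = M + (v t - M) / 2 := by field_simp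
  linarith
end

section
/- Let v : [0, T] → ℝ be differentiable and satisfy C·v'(t) = g·(V_leak − v(t)) + Σⱼ₌₁ᴺ wⱼ·σⱼ(t)·(Eⱼ − v(t)) with C, g, wⱼ > 0 and σⱼ(t) ∈ [0, 1]. If v(0) ≥ m where m = min{V_leak, min_j Eⱼ}, then v(t) ≥ m for all t ∈ [0, T]. -/
/-- Forward-invariant lower bound for the LTC neuron membrane potential. -/
theorem stmt_6 (Nn : ℕ) (hN : 0 < Nn) (T C g V_leak : ℝ) (hC : 0 < C) (hg : 0 < g)
    (w E : Fin Nn → ℝ) (hw : ∀ j, 0 < w j)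
    (σ : Fin Nn → ℝ → ℝ) (hσ : ∀ j t, σ j t ∈ Set.Icc (0 : ℝ) 1)
    (v : ℝ → ℝ)
    (hv : ∀ t ∈ Set.Icc (0 : ℝ) T,
      HasDerivAt v ((g * (V_leak - v t) + ∑ j, w j * σ j t * (E j - v t)) / C) t)
    (hm : min V_leak (Finset.univ.inf' (Finset.univ_nonempty_iff.mpr ⟨⟨0, hN⟩⟩) E) ≤ v 0) :
    ∀ t ∈ Set.Icc (0 : ℝ) T,
      min V_leak (Finset.univ.inf' (Finset.univ_nonempty_iff.mpr ⟨⟨0, hN⟩⟩) E) ≤ v t := by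
  set m := min V_leak (Finset.univ.inf' (Finset.univ_nonempty_iff.mpr ⟨⟨0, hN⟩⟩) E) with hmdef
  have hmV : m ≤ V_leak := min_le_left _ _
  have hmE : ∀ j, m ≤ E j := fun j =>
    le_trans (min_le_right _ _) (Finset.inf'_le _ (Finset.mem_univ j))
  intro t ht
  -- It suffices to show m - v t ≤ ε for every ε > 0.
  have key : ∀ ε > (0 : ℝ), m - v t ≤ ε := by
    intro ε hε
    have hcont : ContinuousOn (fun s => m - v s) (Set.Icc 0 T) := by
      intro s hs
      exact ((continuous_const.sub continuous_id).continuousAt.comp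
        (hv s hs).continuousAt).continuousWithinAt
    have := image_le_of_deriv_right_lt_deriv_boundary
      (f := fun s => m - v s)
      (f' := fun s => -((g * (V_leak - v s) + ∑ j, w j * σ j s * (E j - v s)) / C))
      (a := 0) (b := T) hcont
      (fun s hs => ((hv s (Set.mem_Icc_of_Ico hs)).const_sub m).hasDerivWithinAt)
      ?ha (B := fun _ => ε) (B' := fun _ => 0) (fun s => hasDerivAt_const s ε) ?bound
    · exact this ht
    · show m - v 0 ≤ ε
      linarith
    · intro s hs hfs
      have hvs : v s = m - ε := by linarith
      have hvlt : v s < m := by rw [hvs]; linarith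
      have h1 : g * ε ≤ g * (V_leak - v s) := by
        apply mul_le_mul_of_nonneg_left _ hg.le
        rw [hvs]; linarith [hmV]
      have h2 : (0 : ℝ) ≤ ∑ j, w j * σ j s * (E j - v s) := by
        apply Finset.sum_nonneg
        intro j _
        have := hσ j s
        have hE := hmE j
        apply mul_nonneg (mul_nonneg (hw j).le this.1)
        linarith
      have hpos : 0 < (g * (V_leak - v s) + ∑ j, w j * σ j s * (E j - v s)) / C := by
        apply div_pos _ hC
        nlinarith [mul_pos hg hε]
      linarith
  by_contra h
  push_neg at h
  have : m - v t > 0 := by linarith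
  linarith [key ((m - v t) / 2) (by linarith)]
end

section
/- Let z̃ = (x̃, ỹ) where x̃ solves ẋ̃ = −x̃/τ + A₁ + W_l B σ(C x̃ + μ) with x̃(0) = x₀ and ỹ(0) = C x₀ + μ. Then z̃ solves the (n+N)-dimensional autonomous system ż̃ = −z̃/τ + W σ(z̃) + A + μ₁/τ, where W is the block matrix [[0, W_l B],[0, C W_l B]], A = (A₁, C A₁), and μ₁ = (0, μ). Conversely any solution of the latter with this initial condition projects to a solution of the former. -/
/-- A function satisfying `g' = -g/τ`, `g 0 = 0` is identically zero. -/
lemma decay_zero (τ : ℝ) (g : ℝ → ℝ) (h0 : g 0 = 0)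
    (hg : ∀ t, HasDerivAt g (-(g t) / τ) t) : ∀ t, g t = 0 := by
  have hconst : ∀ t, HasDerivAt (fun s => g s * Real.exp (s / τ)) 0 t := by
    intro t
    have he : HasDerivAt (fun s : ℝ => Real.exp (s / τ))
        (Real.exp (t / τ) * (1 / τ)) t := by
      have := ((hasDerivAt_id t).div_const τ).exp
      simpa using this
    have := (hg t).fun_mul he
    refine this.congr_deriv ?_
    ring
  have hdiff : Differentiable ℝ (fun s => g s * Real.exp (s / τ)) :=
    fun t => (hconst t).differentiableAt
  intro t
  have h1 := is_const_of_deriv_eq_zero hdiff (fun x => (hconst x).deriv) t 0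
  have h2 : g t * Real.exp (t / τ) = 0 := by simpa [h0] using h1
  exact (mul_eq_zero.mp h2).resolve_right (Real.exp_ne_zero _)

/-- Derivative of `(Cm.mulVec (xa s) + μ) k`. -/
lemma mulVec_deriv {n N : ℕ} (Cm : Matrix (Fin N) (Fin n) ℝ) (μ : Fin N → ℝ)
    (xa : ℝ → Fin n → ℝ) (d : Fin n → ℝ) (t : ℝ) (k : Fin N)
    (hx : ∀ i : Fin n, HasDerivAt (fun s => xa s i) (d i) t) :
    HasDerivAt (fun s => (Cm.mulVec (xa s) + μ) k) (Cm.mulVec d k) t := by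
  simp only [Pi.add_apply, Matrix.mulVec, dotProduct]
  exact (HasDerivAt.fun_sum (fun i _ => (hx i).const_mul (Cm k i))).add_const (μ k)

lemma mulVec_lin {n N : ℕ} (Cm : Matrix (Fin N) (Fin n) ℝ) (τ : ℝ)
    (x u v : Fin n → ℝ) (k : Fin N) :
    Cm.mulVec (fun i => -(x i) / τ + u i + v i) k
      = -(Cm.mulVec x k) / τ + Cm.mulVec u k + Cm.mulVec v k := by
  simp only [Matrix.mulVec, dotProduct, mul_add, Finset.sum_add_distrib, neg_div,
    Finset.sum_div, Finset.sum_neg_distrib, mul_div_assoc, mul_neg]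

/-- Equivalence between the original approximating system and its lift
`z̃ = (x̃, ỹ)`, `ỹ = Cx̃ + μ`, which is an autonomous LTC-RNN-form system
`ż̃ = −z̃/τ + Wσ(z̃) + A + μ₁/τ` with block-triangular `W = [[0, W_lB],[0, CW_lB]]`,
`A = (A₁, CA₁)`, `μ₁ = (0, μ)`. -/
theorem stmt_14 (n N : ℕ) (τ : ℝ) (hτ : 0 < τ) (σ : ℝ → ℝ)
    (Wl : Matrix (Fin n) (Fin n) ℝ) (Bm : Matrix (Fin n) (Fin N) ℝ)
    (Cm : Matrix (Fin N) (Fin n) ℝ) (μ : Fin N → ℝ) (A₁ : Fin n → ℝ)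
    (x₀ : Fin n → ℝ) :
    (∀ xa : ℝ → Fin n → ℝ,
      xa 0 = x₀ →
      (∀ t : ℝ, ∀ i : Fin n,
        HasDerivAt (fun s => xa s i)
          (-(xa t i) / τ + A₁ i
            + (Wl * Bm).mulVec (fun j => σ ((Cm.mulVec (xa t) + μ) j)) i) t) →
      ((∀ t : ℝ, ∀ i : Fin n,
          HasDerivAt (fun s => xa s i)
            (-(xa t i) / τ
              + (Wl * Bm).mulVec (fun j => σ ((Cm.mulVec (xa t) + μ) j)) i + A₁ i) t) ∧
        (∀ t : ℝ, ∀ k : Fin N,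
          HasDerivAt (fun s => (Cm.mulVec (xa s) + μ) k)
            (-((Cm.mulVec (xa t) + μ) k) / τ
              + (Cm * (Wl * Bm)).mulVec (fun j => σ ((Cm.mulVec (xa t) + μ) j)) k
              + Cm.mulVec A₁ k + μ k / τ) t))) ∧
    (∀ xa : ℝ → Fin n → ℝ, ∀ ya : ℝ → Fin N → ℝ,
      xa 0 = x₀ → ya 0 = Cm.mulVec x₀ + μ →
      (∀ t : ℝ, ∀ i : Fin n,
        HasDerivAt (fun s => xa s i)
          (-(xa t i) / τ + (Wl * Bm).mulVec (fun j => σ (ya t j)) i + A₁ i) t) →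
      (∀ t : ℝ, ∀ k : Fin N,
        HasDerivAt (fun s => ya s k)
          (-(ya t k) / τ + (Cm * (Wl * Bm)).mulVec (fun j => σ (ya t j)) k
            + Cm.mulVec A₁ k + μ k / τ) t) →
      ∀ t : ℝ, ∀ i : Fin n,
        HasDerivAt (fun s => xa s i)
          (-(xa t i) / τ + A₁ i
            + (Wl * Bm).mulVec (fun j => σ ((Cm.mulVec (xa t) + μ) j)) i) t) := by
  constructor
  · intro xa _ hx
    constructor
    · intro t i
      have := hx t i
      convert this using 1
      ring
    · intro t k
      set σ' : Fin N → ℝ := fun j => σ ((Cm.mulVec (xa t) + μ) j) with hσ'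
      have hd := mulVec_deriv Cm μ xa
        (fun i => -(xa t i) / τ + A₁ i + (Wl * Bm).mulVec σ' i) t k (hx t)
      convert hd using 1
      rw [mulVec_lin, ← Matrix.mulVec_mulVec]
      simp only [Pi.add_apply]
      ring
  · intro xa ya hx0 hy0 hx hy
    -- show ya t = Cm.mulVec (xa t) + μ
    have hyeq : ∀ t, ya t = Cm.mulVec (xa t) + μ := by
      have hg : ∀ k : Fin N, ∀ t, ya t k - (Cm.mulVec (xa t) + μ) k = 0 := by
        intro k
        apply decay_zero τ (fun t => ya t k - (Cm.mulVec (xa t) + μ) k)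
        · simp [hx0, hy0]
        · intro t
          have hd := mulVec_deriv Cm μ xa
            (fun i => -(xa t i) / τ + (Wl * Bm).mulVec (fun j => σ (ya t j)) i + A₁ i)
            t k (hx t)
          have := (hy t k).fun_sub hd
          refine this.congr_deriv ?_
          rw [mulVec_lin, ← Matrix.mulVec_mulVec]
          simp only [Pi.add_apply]
          ring
      intro t
      funext k
      have := hg k t
      simp only [Pi.add_apply] at this ⊢
      linarith
    intro t i
    have := hx t i
    rw [hyeq t] at this
    convert this using 1
    ring
end
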